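/- arXiv:2109.14892 — 3 statements merged into one kernel-verified Lean document; each statement's English description precedes it below -/
import Mathlib

section
/- Every segment of a rectangulation has at most two endpoints at vertices of positive exponent; consequently the number S of segments in any rectangulation satisfies S ≥ (1/2)·Σ_v exp(v), i.e., S_opt ≥ exp(N)/2. -/
/-- Every segment of a rectangulation has at most two endpoints at vertices of positive
exponent, while any rectangulation must place at least `exp(v)` segment-ends at each
vertex `v`; consequently the number `S` of segments satisfies `2S ≥ Σ_v exp(v)`,
i.e. `S_opt ≥ exp(N)/2`. -/
theorem stmt_4 {Seg Vert : Type*} [Fintype Seg] [Fintype Vert] [DecidableEq Vert]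
    (ends : Seg → Finset Vert) (expv : Vert → ℕ)
    (hends : ∀ s : Seg, (ends s).card ≤ 2)
    (hsat : ∀ v : Vert, expv v ≤ (Finset.univ.filter (fun s : Seg => v ∈ ends s)).card) :
    ∑ v : Vert, expv v ≤ 2 * Fintype.card Seg := by
  calc ∑ v : Vert, expv v
      ≤ ∑ v : Vert, (Finset.univ.filter (fun s : Seg => v ∈ ends s)).card :=
        Finset.sum_le_sum fun v _ => hsat v
    _ = ∑ s : Seg, (ends s).card := by
        simp only [Finset.card_filter]
        rw [Finset.sum_comm]
        refine Finset.sum_congr rfl fun s _ => ?_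
        rw [← Finset.card_filter, Finset.filter_univ_mem]
    _ ≤ ∑ _s : Seg, 2 := Finset.sum_le_sum fun s _ => hends s
    _ = 2 * Fintype.card Seg := by simp [mul_comm]
end

section
/- For a finite multigraph G and edge set S, the rank of S in the bicircular matroid equals |V(S)| − tc(S), where tc(S) is the number of connected components of the subgraph induced by S that are trees. -/
open Finset
open scoped Classical

/-- Vertices covered by an edge set `T` of the multigraph `ends : Ed → Sym2 V`. -/
noncomputable def vcov {V Ed : Type*} [Fintype V] (ends : Ed → Sym2 V)
    (T : Finset Ed) : Finset V :=
  Finset.univ.filter (fun v => ∃ e ∈ T, v ∈ ends e)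

/-- Reachability inside the subgraph induced by the edge set `T`. -/
def reach {V Ed : Type*} (ends : Ed → Sym2 V) (T : Finset Ed) (a b : V) : Prop :=
  Relation.ReflTransGen (fun x y : V => ∃ e ∈ T, ends e = s(x, y)) a b

/-- Edges of the connected component of `v` in the subgraph induced by `T`. -/
noncomputable def compE {V Ed : Type*} (ends : Ed → Sym2 V) (T : Finset Ed) (v : V) :
    Finset Ed :=
  T.filter (fun e => ∃ a, a ∈ ends e ∧ reach ends T v a)

/-- Vertices of the connected component of `v` in the subgraph induced by `T`. -/
noncomputable def compV {V Ed : Type*} [Fintype V] (ends : Ed → Sym2 V) (T : Finset Ed)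
    (v : V) : Finset V :=
  (vcov ends T).filter (fun w => reach ends T v w)

/-- The number of connected components of the subgraph induced by `T` that are trees
(a connected component is a tree iff its number of edges is one less than its number
of vertices). -/
noncomputable def tc {V Ed : Type*} [Fintype V] (ends : Ed → Sym2 V) (T : Finset Ed) : ℕ :=
  (((vcov ends T).filter
      (fun v => (compE ends T v).card + 1 = (compV ends T v).card)).image
    (fun v => compV ends T v)).card

/-- `T` induces a pseudoforest: every connected component has at most one cycle,
equivalently each component has at most as many edges as vertices. -/
def pseudoforest {V Ed : Type*} [Fintype V] (ends : Ed → Sym2 V) (T : Finset Ed) : Prop :=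
  ∀ v ∈ vcov ends T, (compE ends T v).card ≤ (compV ends T v).card

/-- The rank of an edge set in the bicircular matroid: the maximum size of a subset
inducing a pseudoforest. -/
noncomputable def bicircRank {V Ed : Type*} [Fintype V] (ends : Ed → Sym2 V)
    (T : Finset Ed) : ℕ :=
  (T.powerset.filter (fun T' => pseudoforest ends T')).sup Finset.card

noncomputable def comps {V Ed : Type*} [Fintype V] (ends : Ed → Sym2 V)
    (T : Finset Ed) : Finset (Finset V) :=
  (vcov ends T).image (compV ends T)

noncomputable def eIn {V Ed : Type*} [Fintype V] (ends : Ed → Sym2 V)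
    (T : Finset Ed) (C : Finset V) : Finset Ed :=
  T.filter (fun e => ∃ a, a ∈ ends e ∧ a ∈ C)


namespace Bic

set_option linter.unusedSectionVars false

variable {V Ed : Type*} [Fintype V] {ends : Ed → Sym2 V} {T S : Finset Ed} {a b c v w : V} {e : Ed} {C C' : Finset V}

lemma reach_refl (v : V) : reach ends T v v := Relation.ReflTransGen.refl

lemma step_symm (h : ∃ e ∈ T, ends e = s(a, b)) : ∃ e ∈ T, ends e = s(b, a) := by
  obtain ⟨e, he, h⟩ := h; exact ⟨e, he, by rw [h, Sym2.eq_swap]⟩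

lemma reach_symm (h : reach ends T a b) : reach ends T b a := by
  induction h with
  | refl => exact Relation.ReflTransGen.refl
  | tail _ hstep ih => exact Relation.ReflTransGen.head (step_symm hstep) ih

lemma reach_trans (h1 : reach ends T a b) (h2 : reach ends T b c) : reach ends T a c :=
  Relation.ReflTransGen.trans h1 h2

lemma reach_mono (hTS : T ⊆ S) (h : reach ends T a b) : reach ends S a b := by
  induction h with
  | refl => exact Relation.ReflTransGen.refl
  | tail _ hstep ih =>
      obtain ⟨e, he, hh⟩ := hstep
      exact ih.tail ⟨e, hTS he, hh⟩

lemma mem_vcov (he : a ∈ ends e) (heT : e ∈ T) : a ∈ vcov ends T := by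
  simp only [vcov, mem_filter, mem_univ, true_and]
  exact ⟨e, heT, he⟩

lemma reach_mem_vcov (h : reach ends T v w) (hne : w ≠ v) : w ∈ vcov ends T := by
  induction h with
  | refl => exact absurd rfl hne
  | tail _ hstep _ =>
      obtain ⟨e, he, hh⟩ := hstep
      exact mem_vcov (by rw [hh]; exact Sym2.mem_mk_right _ _) he

lemma reach_step (he : e ∈ T) (ha : a ∈ ends e) (hb : b ∈ ends e) : reach ends T a b := by
  obtain ⟨⟨x, y⟩, hxy⟩ := Quot.exists_rep (ends e)
  have hxy' : ends e = s(x, y) := hxy.symm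
  rw [hxy', Sym2.mem_iff] at ha hb
  rcases ha with rfl | rfl <;> rcases hb with rfl | rfl
  · exact Relation.ReflTransGen.refl
  · exact Relation.ReflTransGen.single ⟨e, he, hxy'⟩
  · exact Relation.ReflTransGen.single ⟨e, he, by rw [hxy', Sym2.eq_swap]⟩
  · exact Relation.ReflTransGen.refl

lemma reach_iff_of_reach (h : reach ends T v w) (x : V) :
    reach ends T v x ↔ reach ends T w x :=
  ⟨fun h' => reach_trans (reach_symm h) h', fun h' => reach_trans h h'⟩

lemma compV_eq_of_reach (h : reach ends T v w) : compV ends T v = compV ends T w := by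
  ext x
  simp only [compV, mem_filter, and_congr_right_iff]
  intro _
  exact reach_iff_of_reach h x

lemma compE_eq_of_reach (h : reach ends T v w) : compE ends T v = compE ends T w := by
  ext e
  simp only [compE, mem_filter, and_congr_right_iff]
  intro _
  constructor
  · rintro ⟨x, hx, hr⟩; exact ⟨x, hx, (reach_iff_of_reach h x).1 hr⟩
  · rintro ⟨x, hx, hr⟩; exact ⟨x, hx, (reach_iff_of_reach h x).2 hr⟩

lemma mem_compV_self (hv : v ∈ vcov ends T) : v ∈ compV ends T v :=
  mem_filter.2 ⟨hv, reach_refl v⟩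

lemma reach_of_mem_compV (h : w ∈ compV ends T v) : reach ends T v w :=
  (mem_filter.1 h).2

lemma compV_disjoint (h : ¬ reach ends T v w) :
    Disjoint (compV ends T v) (compV ends T w) := by
  rw [disjoint_left]
  intro x hx hx'
  exact h (reach_trans (reach_of_mem_compV hx) (reach_symm (reach_of_mem_compV hx')))


def stepN {α : Type*} (r : α → α → Prop) : ℕ → α → α → Prop
  | 0, a, b => a = b
  | (n+1), a, b => ∃ c, stepN r n a c ∧ r c b

lemma reflTransGen_iff_stepN {α : Type*} (r : α → α → Prop) (a b : α) :
    Relation.ReflTransGen r a b ↔ ∃ n, stepN r n a b := by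
  constructor
  · intro h
    induction h with
    | refl => exact ⟨0, rfl⟩
    | tail _ hstep ih =>
        obtain ⟨n, hn⟩ := ih
        exact ⟨n+1, _, hn, hstep⟩
  · rintro ⟨n, h⟩
    induction n generalizing b with
    | zero => simp only [stepN] at h; subst h; exact Relation.ReflTransGen.refl
    | succ n ih =>
        simp only [stepN] at h
        obtain ⟨c, hc, hr⟩ := h
        exact (ih c hc).tail hr

lemma card_reach_le (T : Finset Ed) (v : V) :
    (univ.filter (fun w => reach ends T v w)).card ≤ (compE ends T v).card + 1 := by
  classical
  set R := univ.filter (fun w => reach ends T v w) with hR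
  have hv : v ∈ R := mem_filter.2 ⟨mem_univ v, reach_refl v⟩
  have hcard : R.card = (R.erase v).card + 1 := by
    rw [Finset.card_erase_of_mem hv]
    have : 1 ≤ R.card := Finset.card_pos.2 ⟨v, hv⟩
    omega
  rcases (R.erase v).eq_empty_or_nonempty with hemp | ⟨w0, hw0⟩
  · rw [hcard, hemp]; simp
  · set st := fun x y : V => ∃ e ∈ T, ends e = s(x, y) with hst
    have hreach : ∀ w ∈ R, ∃ n, stepN st n v w := by
      intro w hw
      exact (reflTransGen_iff_stepN st v w).1 (mem_filter.1 hw).2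
    set d : V → ℕ := fun w => if h : ∃ n, stepN st n v w then Nat.find h else 0 with hd
    have key : ∀ w ∈ R.erase v,
        ∃ e, e ∈ compE ends T v ∧ ∃ x, ends e = s(x, w) ∧ d x < d w := by
      intro w hw
      obtain ⟨hwv, hwR⟩ := mem_erase.1 hw
      have hex : ∃ n, stepN st n v w := hreach w hwR
      have hdw : d w = Nat.find hex := by rw [hd]; exact dif_pos hex
      have hn : stepN st (Nat.find hex) v w := Nat.find_spec hex
      cases hnn : Nat.find hex with
      | zero =>
          rw [hnn] at hn; simp only [stepN] at hn
          exact absurd hn.symm hwv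
      | succ m =>
          rw [hnn] at hn; simp only [stepN] at hn
          obtain ⟨x, hx, e, heT, hends⟩ := hn
          have hxr : reach ends T v x := (reflTransGen_iff_stepN st v x).2 ⟨m, hx⟩
          have hdx : d x ≤ m := by
            rw [hd]; simp only; rw [dif_pos ⟨m, hx⟩]
            exact Nat.find_min' _ hx
          refine ⟨e, ?_, x, hends, ?_⟩
          · simp only [compE, mem_filter]
            exact ⟨heT, x, by rw [hends]; exact Sym2.mem_mk_left _ _, hxr⟩
          · rw [hdw, hnn]; omega
    obtain ⟨e0, _, _⟩ := key w0 hw0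
    set f : V → Ed := fun w =>
      if h : ∃ e, e ∈ compE ends T v ∧ ∃ x, ends e = s(x, w) ∧ d x < d w
      then h.choose else e0 with hf
    have hfspec : ∀ w ∈ R.erase v,
        f w ∈ compE ends T v ∧ ∃ x, ends (f w) = s(x, w) ∧ d x < d w := by
      intro w hw
      have h := key w hw
      rw [hf]; simp only
      rw [dif_pos h]
      exact h.choose_spec
    have hinj : ∀ w ∈ R.erase v, ∀ w' ∈ R.erase v, f w = f w' → w = w' := by
      intro w hw w' hw' heq
      by_contra hne
      obtain ⟨_, x, hx1, hx2⟩ := hfspec w hw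
      obtain ⟨_, x', hx1', hx2'⟩ := hfspec w' hw'
      rw [heq] at hx1
      have h12 : s(x, w) = s(x', w') := by rw [← hx1, hx1']
      have hwmem : w' ∈ s(x, w) := by rw [h12]; exact Sym2.mem_mk_right _ _
      rw [Sym2.mem_iff] at hwmem
      rcases hwmem with rfl | rfl
      · have hwmem2 : w ∈ s(x', w') := by rw [← h12]; exact Sym2.mem_mk_right _ _
        rw [Sym2.mem_iff] at hwmem2
        rcases hwmem2 with rfl | rfl
        · omega
        · exact hne rfl
      · exact hne rfl
    have hle : (R.erase v).card ≤ (compE ends T v).card := by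
      apply Finset.card_le_card_of_injOn f (fun w hw => (hfspec w hw).1)
      intro w hw w' hw' h
      exact hinj w (Finset.mem_coe.1 hw) w' (Finset.mem_coe.1 hw') h
    omega

lemma compV_eq_filter (hv : v ∈ vcov ends T) :
    compV ends T v = univ.filter (fun w => reach ends T v w) := by
  ext w
  simp only [compV, mem_filter, mem_univ, true_and]
  constructor
  · rintro ⟨_, h⟩; exact h
  · intro h
    refine ⟨?_, h⟩
    by_cases hwv : w = v
    · subst hwv; exact hv
    · exact reach_mem_vcov h hwv

lemma compV_card_le (hv : v ∈ vcov ends T) :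
    (compV ends T v).card ≤ (compE ends T v).card + 1 := by
  rw [compV_eq_filter hv]; exact card_reach_le T v


lemma vcov_mono (hTS : T ⊆ S) : vcov ends T ⊆ vcov ends S := by
  intro x hx
  simp only [vcov, mem_filter, mem_univ, true_and] at hx ⊢
  obtain ⟨e, he, hx⟩ := hx
  exact ⟨e, hTS he, hx⟩

lemma compV_subset_vcov : compV ends T v ⊆ vcov ends T := filter_subset _ _

lemma eIn_subset : eIn ends T C ⊆ T := filter_subset _ _

lemma mem_eIn (heT : e ∈ T) (ha : a ∈ ends e) (haC : a ∈ C) : e ∈ eIn ends T C := by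
  simp only [eIn, mem_filter]
  exact ⟨heT, a, ha, haC⟩

lemma mem_comps_self (hv : v ∈ vcov ends T) : compV ends T v ∈ comps ends T :=
  Finset.mem_image_of_mem _ hv

lemma compV_eq_of_mem_comps (hC : C ∈ comps ends T) (ha : a ∈ C) :
    C = compV ends T a ∧ a ∈ vcov ends T := by
  obtain ⟨u, hu, rfl⟩ := Finset.mem_image.1 hC
  have h := mem_filter.1 ha
  exact ⟨compV_eq_of_reach h.2, h.1⟩

lemma comps_eq_of_not_disjoint (hC : C ∈ comps ends T) (hC' : C' ∈ comps ends T)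
    (h : ¬ Disjoint C C') : C = C' := by
  rw [Finset.not_disjoint_iff] at h
  obtain ⟨x, hx, hx'⟩ := h
  rw [(compV_eq_of_mem_comps hC hx).1, (compV_eq_of_mem_comps hC' hx').1]

lemma vcov_eq_biUnion : vcov ends T = (comps ends T).biUnion id := by
  ext x
  simp only [Finset.mem_biUnion, id]
  constructor
  · intro hx
    exact ⟨compV ends T x, mem_comps_self hx, mem_compV_self hx⟩
  · rintro ⟨C, hC, hx⟩
    exact (compV_eq_of_mem_comps hC hx).2

lemma card_vcov_eq_sum : (vcov ends T).card = ∑ C ∈ comps ends T, C.card := by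
  rw [vcov_eq_biUnion]
  exact Finset.card_biUnion (fun C hC C' hC' hne =>
    by_contra fun h => hne (comps_eq_of_not_disjoint hC hC' h))

lemma eIn_compV_eq_compE (hv : v ∈ vcov ends T) :
    eIn ends T (compV ends T v) = compE ends T v := by
  ext e
  simp only [eIn, compE, mem_filter, and_congr_right_iff]
  intro heT
  constructor
  · rintro ⟨x, hx, hxC⟩
    exact ⟨x, hx, reach_of_mem_compV hxC⟩
  · rintro ⟨x, hx, hr⟩
    exact ⟨x, hx, mem_filter.2 ⟨mem_vcov hx heT, hr⟩⟩

lemma card_eq_sum_eIn (hTS : T ⊆ S) :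
    T.card = ∑ C ∈ comps ends S, (eIn ends T C).card := by
  have hT : T = (comps ends S).biUnion (eIn ends T) := by
    ext e
    simp only [Finset.mem_biUnion]
    constructor
    · intro he
      obtain ⟨⟨x, y⟩, hxy⟩ := Quot.exists_rep (ends e)
      have hx : x ∈ ends e := by rw [← hxy]; exact Sym2.mem_mk_left _ _
      have hxv : x ∈ vcov ends S := mem_vcov hx (hTS he)
      exact ⟨compV ends S x, mem_comps_self hxv,
        mem_eIn he hx (mem_compV_self hxv)⟩
    · rintro ⟨C, _, he⟩
      exact eIn_subset he
  conv_lhs => rw [hT]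
  apply Finset.card_biUnion
  intro C hC C' hC' hne
  rw [Function.onFun, Finset.disjoint_left]
  intro e he he'
  simp only [eIn, mem_filter] at he he'
  obtain ⟨heT, x, hx, hxC⟩ := he
  obtain ⟨_, x', hx', hxC'⟩ := he'
  have hr : reach ends S x x' := reach_step (hTS heT) hx hx'
  have h1 := (compV_eq_of_mem_comps hC hxC).1
  have h2 := (compV_eq_of_mem_comps hC' hxC').1
  exact hne (by rw [h1, h2, compV_eq_of_reach hr])

lemma tc_eq (S : Finset Ed) :
    tc ends S = ((comps ends S).filter
      (fun C => (eIn ends S C).card + 1 = C.card)).card := by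
  unfold tc
  congr 1
  ext C
  simp only [Finset.mem_image, mem_filter]
  constructor
  · rintro ⟨v, ⟨hv, hcond⟩, rfl⟩
    refine ⟨mem_comps_self hv, ?_⟩
    rw [eIn_compV_eq_compE hv]
    exact hcond
  · rintro ⟨hC, hcond⟩
    obtain ⟨v, hv, rfl⟩ := Finset.mem_image.1 hC
    refine ⟨v, ⟨hv, ?_⟩, rfl⟩
    rw [← eIn_compV_eq_compE hv]
    exact hcond

lemma reach_eIn_iff (hTS : T ⊆ S) (v w : V) :
    reach ends T v w ↔ reach ends (eIn ends T (compV ends S v)) v w := by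
  constructor
  · intro h
    induction h with
    | refl => exact Relation.ReflTransGen.refl
    | @tail b' c' h1 hstep ih =>
        obtain ⟨e, heT, hends⟩ := hstep
        refine ih.tail ⟨e, ?_, hends⟩
        have hb : b' ∈ ends e := by rw [hends]; exact Sym2.mem_mk_left _ _
        exact mem_eIn heT hb
          (mem_filter.2 ⟨mem_vcov hb (hTS heT), reach_mono hTS h1⟩)
  · exact reach_mono eIn_subset

lemma compE_eIn_eq (hTS : T ⊆ S) (v : V) :
    compE ends (eIn ends T (compV ends S v)) v = compE ends T v := by
  ext e
  simp only [compE, mem_filter]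
  constructor
  · rintro ⟨he, x, hx, hr⟩
    exact ⟨eIn_subset he, x, hx, reach_mono eIn_subset hr⟩
  · rintro ⟨he, x, hx, hr⟩
    have hxC : x ∈ compV ends S v :=
      mem_filter.2 ⟨mem_vcov hx (hTS he), reach_mono hTS hr⟩
    exact ⟨mem_eIn he hx hxC, x, hx, (reach_eIn_iff hTS v x).1 hr⟩

lemma compV_eIn_eq (hTS : T ⊆ S) (v : V) :
    compV ends (eIn ends T (compV ends S v)) v = compV ends T v := by
  ext x
  show x ∈ (vcov ends (eIn ends T (compV ends S v))).filter
      (fun w => reach ends (eIn ends T (compV ends S v)) v w) ↔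
    x ∈ (vcov ends T).filter (fun w => reach ends T v w)
  simp only [mem_filter]
  constructor
  · rintro ⟨hx, hr⟩
    exact ⟨vcov_mono eIn_subset hx, reach_mono eIn_subset hr⟩
  · rintro ⟨hx, hr⟩
    refine ⟨?_, (reach_eIn_iff hTS v x).1 hr⟩
    simp only [vcov, mem_filter, mem_univ, true_and] at hx ⊢
    obtain ⟨e, heT, hx'⟩ := hx
    refine ⟨e, mem_eIn heT hx' ?_, hx'⟩
    exact mem_filter.2 ⟨mem_vcov hx' (hTS heT), reach_mono hTS hr⟩

lemma vcov_eIn_subset (hTS : T ⊆ S) (hC : C ∈ comps ends S) :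
    vcov ends (eIn ends T C) ⊆ C := by
  intro x hx
  simp only [vcov, mem_filter, mem_univ, true_and] at hx
  obtain ⟨e, he, hx⟩ := hx
  simp only [eIn, mem_filter] at he
  obtain ⟨heT, a, ha, haC⟩ := he
  have hr : reach ends S a x := reach_step (hTS heT) ha hx
  rw [(compV_eq_of_mem_comps hC haC).1]
  exact mem_filter.2 ⟨mem_vcov hx (hTS heT), hr⟩

lemma pf_card_le (hpf : pseudoforest ends T) : T.card ≤ (vcov ends T).card := by
  rw [card_eq_sum_eIn (ends := ends) (Finset.Subset.refl T), card_vcov_eq_sum]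
  apply Finset.sum_le_sum
  intro C hC
  obtain ⟨v, hv, rfl⟩ := Finset.mem_image.1 hC
  rw [eIn_compV_eq_compE hv]
  exact hpf v hv

lemma upper (hTS : T ⊆ S) (hpf : pseudoforest ends T) :
    T.card + tc ends S ≤ (vcov ends S).card := by
  rw [card_eq_sum_eIn (ends := ends) hTS, tc_eq, card_vcov_eq_sum, Finset.card_filter,
    ← Finset.sum_add_distrib]
  apply Finset.sum_le_sum
  intro C hC
  by_cases htree : (eIn ends S C).card + 1 = C.card
  · rw [if_pos htree]
    have hsub : eIn ends T C ⊆ eIn ends S C := by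
      intro e he
      simp only [eIn, mem_filter] at he ⊢
      exact ⟨hTS he.1, he.2⟩
    have := Finset.card_le_card hsub
    omega
  · rw [if_neg htree, add_zero]
    have h1 : vcov ends (eIn ends T C) ⊆ C := vcov_eIn_subset hTS hC
    have h2 : pseudoforest ends (eIn ends T C) := by
      intro u hu
      have huC : u ∈ C := h1 hu
      have hCu : C = compV ends S u := (compV_eq_of_mem_comps hC huC).1
      have huT : u ∈ vcov ends T := vcov_mono eIn_subset hu
      rw [hCu, compE_eIn_eq hTS u, compV_eIn_eq hTS u]
      exact hpf u huT
    calc (eIn ends T C).card ≤ (vcov ends (eIn ends T C)).card := pf_card_le h2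
      _ ≤ C.card := Finset.card_le_card h1


lemma reach_empty_iff : reach ends (∅ : Finset Ed) v w ↔ v = w := by
  constructor
  · intro h
    induction h with
    | refl => rfl
    | tail _ hstep _ => obtain ⟨e, he, _⟩ := hstep; exact absurd he (Finset.notMem_empty e)
  · rintro rfl; exact reach_refl v

lemma crossing (v : V) : ∀ w, reach ends S v w → ¬ reach ends T v w →
    ∃ e ∈ S, ∃ x y, ends e = s(x, y) ∧ reach ends T v x ∧ ¬ reach ends T v y ∧
      reach ends S v y := by
  intro w h
  induction h with
  | refl => intro h'; exact absurd Relation.ReflTransGen.refl h'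
  | @tail b' c' h1 hstep ih =>
      intro hc
      by_cases hb : reach ends T v b'
      · obtain ⟨e, heS, hends⟩ := hstep
        exact ⟨e, heS, b', c', hends, hb, hc, h1.tail ⟨e, heS, hends⟩⟩
      · exact ih hb

lemma grow_aux (hv : v ∈ vcov ends S) (k : ℕ) :
    ∀ T' : Finset Ed, T' ⊆ S →
      (∀ e ∈ T', ∀ x ∈ ends e, reach ends T' v x) →
      (univ.filter (fun w => reach ends T' v w)).card = T'.card + 1 →
      (compV ends S v).card ≤ (univ.filter (fun w => reach ends T' v w)).card + k →
      ∃ T'' : Finset Ed, T'' ⊆ S ∧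
        (∀ e ∈ T'', ∀ x ∈ ends e, reach ends T'' v x) ∧
        T''.card + 1 = (compV ends S v).card ∧
        ∀ w ∈ compV ends S v, reach ends T'' v w := by
  induction k with
  | zero =>
      intro T' hT'S hI2 hI3 hk
      have hRsub : univ.filter (fun w => reach ends T' v w) ⊆ compV ends S v := by
        intro w hw
        have hr : reach ends T' v w := (mem_filter.1 hw).2
        by_cases hwv : w = v
        · subst hwv; exact mem_compV_self hv
        · exact mem_filter.2 ⟨vcov_mono hT'S (reach_mem_vcov hr hwv), reach_mono hT'S hr⟩
      have heq := Finset.eq_of_subset_of_card_le hRsub (by omega)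
      refine ⟨T', hT'S, hI2, by rw [← heq, hI3], ?_⟩
      intro w hw
      rw [← heq] at hw
      exact (mem_filter.1 hw).2
  | succ k ih =>
      intro T' hT'S hI2 hI3 hk
      by_cases hfull : (compV ends S v).card ≤
          (univ.filter (fun w => reach ends T' v w)).card + k
      · exact ih T' hT'S hI2 hI3 hfull
      · have hss : ¬ compV ends S v ⊆ univ.filter (fun w => reach ends T' v w) := by
          intro h
          exact hfull (le_trans (Finset.card_le_card h) (Nat.le_add_right _ _))
        obtain ⟨w, hwC, hwR⟩ := Finset.not_subset.1 hss
        have hrSw : reach ends S v w := (mem_filter.1 hwC).2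
        have hnrw : ¬ reach ends T' v w := fun h => hwR (mem_filter.2 ⟨mem_univ w, h⟩)
        obtain ⟨e, heS, x, y, hends, hx, hy, hySv⟩ := crossing v w hrSw hnrw
        have heT' : e ∉ T' := fun hmem =>
          hy (hI2 e hmem y (by rw [hends]; exact Sym2.mem_mk_right _ _))
        have hT2S : insert e T' ⊆ S := by
          intro z hz
          rcases mem_insert.1 hz with rfl | h
          exacts [heS, hT'S h]
        have hR2 : univ.filter (fun z => reach ends (insert e T') v z) =
            insert y (univ.filter (fun z => reach ends T' v z)) := by
          ext z
          simp only [mem_filter, mem_univ, true_and, mem_insert]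
          constructor
          · intro hz
            induction hz with
            | refl => right; exact reach_refl v
            | @tail p q h1 hstep ihz =>
                obtain ⟨e', he', hends'⟩ := hstep
                rcases mem_insert.1 he' with rfl | he'T
                · have hq : q ∈ ends e' := by rw [hends']; exact Sym2.mem_mk_right _ _
                  rw [hends, Sym2.mem_iff] at hq
                  rcases hq with rfl | rfl
                  · right; exact hx
                  · left; rfl
                · right
                  exact hI2 e' he'T q (by rw [hends']; exact Sym2.mem_mk_right _ _)
          · intro hz
            rcases hz with rfl | hz
            · exact (reach_mono (Finset.subset_insert e T') hx).tail
                ⟨e, mem_insert_self e T', hends⟩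
            · exact reach_mono (Finset.subset_insert e T') hz
        have hI2' : ∀ e' ∈ insert e T', ∀ z ∈ ends e', reach ends (insert e T') v z := by
          intro e' he' z hz
          rcases mem_insert.1 he' with heq | he'T
          · subst heq
            rw [hends, Sym2.mem_iff] at hz
            rcases hz with rfl | rfl
            · exact reach_mono (Finset.subset_insert e' T') hx
            · exact (reach_mono (Finset.subset_insert e' T') hx).tail
                ⟨e', mem_insert_self e' T', hends⟩
          · exact reach_mono (Finset.subset_insert e T') (hI2 e' he'T z hz)
        have hyR : y ∉ univ.filter (fun z => reach ends T' v z) := by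
          simp only [mem_filter, mem_univ, true_and]
          exact hy
        have hI3' : (univ.filter (fun z => reach ends (insert e T') v z)).card =
            (insert e T').card + 1 := by
          rw [hR2, Finset.card_insert_of_notMem hyR,
            Finset.card_insert_of_notMem heT', hI3]
        apply ih (insert e T') hT2S hI2' hI3'
        rw [hR2, Finset.card_insert_of_notMem hyR]
        omega

lemma exists_spanning (hv : v ∈ vcov ends S) :
    ∃ T'' : Finset Ed, T'' ⊆ S ∧
      (∀ e ∈ T'', ∀ x ∈ ends e, reach ends T'' v x) ∧
      T''.card + 1 = (compV ends S v).card ∧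
      ∀ w ∈ compV ends S v, reach ends T'' v w := by
  have hfil : univ.filter (fun w => reach ends (∅ : Finset Ed) v w) = {v} := by
    ext z
    simp only [mem_filter, mem_univ, true_and, mem_singleton, reach_empty_iff]
    exact eq_comm
  apply grow_aux hv (compV ends S v).card ∅ (Finset.empty_subset S)
    (by intro e he; exact absurd he (Finset.notMem_empty e))
  · rw [hfil]; simp
  · rw [hfil]; simp

lemma comp_good (C : Finset V) (hC : C ∈ comps ends S) :
    ∃ T' : Finset Ed, T' ⊆ eIn ends S C ∧
      T'.card + (if (eIn ends S C).card + 1 = C.card then 1 else 0) = C.card ∧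
      vcov ends T' = C ∧
      ∀ a ∈ C, ∀ b ∈ C, reach ends T' a b := by
  obtain ⟨v, hv, rfl⟩ := Finset.mem_image.1 hC
  by_cases htree : (eIn ends S (compV ends S v)).card + 1 = (compV ends S v).card
  · refine ⟨eIn ends S (compV ends S v), Finset.Subset.refl _,
      by rw [if_pos htree]; exact htree, ?_, ?_⟩
    · apply Finset.Subset.antisymm (vcov_eIn_subset (Finset.Subset.refl S) hC)
      intro w hw
      have hwv : w ∈ vcov ends S := compV_subset_vcov hw
      simp only [vcov, mem_filter, mem_univ, true_and] at hwv ⊢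
      obtain ⟨e, heS, hwe⟩ := hwv
      exact ⟨e, mem_eIn heS hwe hw, hwe⟩
    · intro a ha b hb
      have hra : reach ends (eIn ends S (compV ends S v)) v a :=
        (reach_eIn_iff (Finset.Subset.refl S) v a).1 (reach_of_mem_compV ha)
      have hrb : reach ends (eIn ends S (compV ends S v)) v b :=
        (reach_eIn_iff (Finset.Subset.refl S) v b).1 (reach_of_mem_compV hb)
      exact reach_trans (reach_symm hra) hrb
  · obtain ⟨T0, hT0S, hI2, hI3, hspan⟩ := exists_spanning hv
    have hT0E : T0 ⊆ eIn ends S (compV ends S v) := by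
      intro e he
      obtain ⟨⟨x, y⟩, hxy⟩ := Quot.exists_rep (ends e)
      have hx : x ∈ ends e := by rw [← hxy]; exact Sym2.mem_mk_left _ _
      have hrx : reach ends T0 v x := hI2 e he x hx
      refine mem_eIn (hT0S he) hx (mem_filter.2 ⟨?_, reach_mono hT0S hrx⟩)
      exact vcov_mono hT0S (mem_vcov hx he)
    have hcardE : (compV ends S v).card ≤ (eIn ends S (compV ends S v)).card := by
      have h1 := compV_card_le hv
      rw [← eIn_compV_eq_compE hv] at h1
      omega
    have hex : ∃ e0 ∈ eIn ends S (compV ends S v), e0 ∉ T0 := by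
      by_contra h
      push_neg at h
      have := Finset.card_le_card h
      omega
    obtain ⟨e0, he0E, he0T⟩ := hex
    have hins : insert e0 T0 ⊆ eIn ends S (compV ends S v) := by
      intro z hz
      rcases mem_insert.1 hz with rfl | h
      exacts [he0E, hT0E h]
    refine ⟨insert e0 T0, hins, ?_, ?_, ?_⟩
    · rw [if_neg htree, add_zero, Finset.card_insert_of_notMem he0T]
      omega
    · apply Finset.Subset.antisymm
      · intro w hw
        exact vcov_eIn_subset (Finset.Subset.refl S) hC (vcov_mono hins hw)
      · intro w hw
        by_cases hwv : w = v
        · subst hwv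
          by_cases hone : (compV ends S w).card = 1
          · simp only [eIn, mem_filter] at he0E
            obtain ⟨he0S, a, ha, haC⟩ := he0E
            have haw : a = w := Finset.card_le_one.1 (le_of_eq hone) a haC w hw
            exact mem_vcov (haw ▸ ha) (mem_insert_self e0 T0)
          · have h2 : 1 < (compV ends S w).card := by
              have : 1 ≤ (compV ends S w).card := Finset.card_pos.2 ⟨w, hw⟩
              omega
            obtain ⟨w', hw', hww'⟩ := Finset.exists_mem_ne h2 w
            have hr : reach ends T0 w w' := hspan w' hw'
            have hwc : w ∈ vcov ends T0 :=
              reach_mem_vcov (reach_symm hr) (Ne.symm hww')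
            exact vcov_mono (Finset.subset_insert e0 T0) hwc
        · have hr : reach ends T0 v w := hspan w hw
          exact vcov_mono (Finset.subset_insert e0 T0) (reach_mem_vcov hr hwv)
    · intro a ha b hb
      have hra := reach_mono (Finset.subset_insert e0 T0) (hspan a ha)
      have hrb := reach_mono (Finset.subset_insert e0 T0) (hspan b hb)
      exact reach_trans (reach_symm hra) hrb


lemma lower (S : Finset Ed) :
    ∃ T : Finset Ed, T ⊆ S ∧ pseudoforest ends T ∧
      T.card + tc ends S = (vcov ends S).card := by
  classical
  choose! g hg1 hg2 hg3 hg4 using fun C => comp_good (S := S) (ends := ends) C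
  have hTS : (comps ends S).biUnion g ⊆ S := by
    intro e he
    obtain ⟨C, hC, heg⟩ := Finset.mem_biUnion.1 he
    exact eIn_subset (hg1 C hC heg)
  have hkey : ∀ C' ∈ comps ends S, eIn ends ((comps ends S).biUnion g) C' = g C' := by
    intro C' hC'
    ext e
    simp only [eIn, mem_filter, Finset.mem_biUnion]
    constructor
    · rintro ⟨⟨C, hC, heg⟩, a, ha, haC'⟩
      have heE := hg1 C hC heg
      simp only [eIn, mem_filter] at heE
      obtain ⟨heS, a', ha', ha'C⟩ := heE
      have hr : reach ends S a a' := reach_step heS ha ha'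
      have h1 := (compV_eq_of_mem_comps hC' haC').1
      have h2 := (compV_eq_of_mem_comps hC ha'C).1
      have hCC : C' = C := by rw [h1, h2, compV_eq_of_reach hr]
      rw [hCC]; exact heg
    · intro heg
      have heE := hg1 C' hC' heg
      simp only [eIn, mem_filter] at heE
      obtain ⟨heS, a', ha', ha'C⟩ := heE
      exact ⟨⟨C', hC', heg⟩, a', ha', ha'C⟩
  have hpf : pseudoforest ends ((comps ends S).biUnion g) := by
    intro u hu
    simp only [vcov, mem_filter, mem_univ, true_and] at hu
    obtain ⟨e, he, hue⟩ := hu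
    obtain ⟨C, hC, heg⟩ := Finset.mem_biUnion.1 he
    have heE := hg1 C hC heg
    simp only [eIn, mem_filter] at heE
    obtain ⟨heS, a', ha', ha'C⟩ := heE
    have hr : reach ends S a' u := reach_step heS ha' hue
    have hCa : C = compV ends S a' := (compV_eq_of_mem_comps hC ha'C).1
    have huC : u ∈ C := by
      rw [hCa]
      exact mem_filter.2 ⟨mem_vcov hue heS, hr⟩
    have hCu : C = compV ends S u := (compV_eq_of_mem_comps hC huC).1
    have hEeq : compE ends ((comps ends S).biUnion g) u = compE ends (g C) u := by
      rw [← compE_eIn_eq hTS u, ← hCu, hkey C hC]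
    have hVeq : compV ends ((comps ends S).biUnion g) u = compV ends (g C) u := by
      rw [← compV_eIn_eq hTS u, ← hCu, hkey C hC]
    have hVC : compV ends (g C) u = C := by
      apply Finset.Subset.antisymm
      · intro z hz
        rw [← hg3 C hC]
        exact compV_subset_vcov hz
      · intro z hz
        refine mem_filter.2 ⟨?_, hg4 C hC u huC z hz⟩
        rw [hg3 C hC]; exact hz
    rw [hEeq, hVeq, hVC]
    have hsub : compE ends (g C) u ⊆ g C := by
      intro z hz
      simp only [compE, mem_filter] at hz
      exact hz.1
    calc (compE ends (g C) u).card ≤ (g C).card := Finset.card_le_card hsub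
      _ ≤ C.card := by have := hg2 C hC; omega
  refine ⟨(comps ends S).biUnion g, hTS, hpf, ?_⟩
  rw [card_eq_sum_eIn (ends := ends) hTS, tc_eq, card_vcov_eq_sum, Finset.card_filter,
    ← Finset.sum_add_distrib]
  apply Finset.sum_congr rfl
  intro C hC
  rw [hkey C hC]
  exact hg2 C hC

theorem main (S : Finset Ed) :
    ((S.powerset.filter (fun T' => pseudoforest ends T')).sup Finset.card)
      = (vcov ends S).card - tc ends S := by
  classical
  obtain ⟨T, hTS, hpf, hcard⟩ := lower (ends := ends) S
  apply le_antisymm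
  · apply Finset.sup_le
    intro T' hT'
    rw [mem_filter, Finset.mem_powerset] at hT'
    have := upper hT'.1 hT'.2
    omega
  · have hmem : T ∈ S.powerset.filter (fun T' => pseudoforest ends T') :=
      mem_filter.2 ⟨Finset.mem_powerset.2 hTS, hpf⟩
    have hle := Finset.le_sup (f := Finset.card) hmem
    omega

end Bic

/-- For a finite multigraph and an edge set `S`, the rank of `S` in the bicircular
matroid equals `|V(S)| - tc(S)`, where `tc(S)` is the number of tree components of the
subgraph induced by `S`. -/
theorem stmt_12 {V Ed : Type*} [Fintype V] [Fintype Ed] (ends : Ed → Sym2 V)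
    (S : Finset Ed) :
    bicircRank ends S = (vcov ends S).card - tc ends S := by
  unfold bicircRank
  exact Bic.main (ends := ends) S
end

section
/- Marginal gain is monotone under greedy extension: if S is obtained from S₀ by applying steps of the greedy strategy, then g(S₀) ≤ g(S); moreover, if S is saturating (induces a rectangulation) then |S| = exp(N) − g(S) ≤ exp(N) − g(S₀). -/
open Finset

/-- The marginal gain of a cut-set `S`:
`g(S) = Σ_v (exp(v) - exp_S(v)) - |S|`. -/
def gain {Seg Vert : Type*} [Fintype Vert] (expv : Vert → ℕ)
    (relExp : Finset Seg → Vert → ℕ) (S : Finset Seg) : ℤ :=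
  (∑ v : Vert, ((expv v : ℤ) - (relExp S v : ℤ))) - (S.card : ℤ)

/-- One step of the greedy strategy: a single new segment is added, the relative
exponent of no vertex increases, and the relative exponent of some vertex strictly
decreases. -/
def GreedyStep {Seg Vert : Type*} [DecidableEq Seg]
    (relExp : Finset Seg → Vert → ℕ) (S₀ S₁ : Finset Seg) : Prop :=
  ∃ s ∉ S₀, S₁ = insert s S₀ ∧
    (∀ v : Vert, relExp S₁ v ≤ relExp S₀ v) ∧
    (∃ v : Vert, relExp S₁ v < relExp S₀ v)

lemma gain_step {Seg Vert : Type*} [Fintype Vert] [DecidableEq Seg]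
    (expv : Vert → ℕ) (relExp : Finset Seg → Vert → ℕ) {S₀ S₁ : Finset Seg}
    (h : GreedyStep relExp S₀ S₁) :
    gain expv relExp S₀ ≤ gain expv relExp S₁ := by
  obtain ⟨s, hs, rfl, hle, v, hv⟩ := h
  unfold gain
  rw [Finset.card_insert_of_notMem hs]
  push_cast
  have hsum : (∑ w : Vert, ((relExp S₀ w : ℤ) - (relExp (insert s S₀) w : ℤ)))
      ≥ 1 := by
    have h1 : ∀ w ∈ Finset.univ, (0:ℤ) ≤ (relExp S₀ w : ℤ) - (relExp (insert s S₀) w : ℤ) := by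
      intro w _
      have := hle w
      omega
    have h2 : (1:ℤ) ≤ (relExp S₀ v : ℤ) - (relExp (insert s S₀) v : ℤ) := by
      omega
    calc (1:ℤ) ≤ (relExp S₀ v : ℤ) - (relExp (insert s S₀) v : ℤ) := h2
      _ ≤ ∑ w : Vert, ((relExp S₀ w : ℤ) - (relExp (insert s S₀) w : ℤ)) :=
        Finset.single_le_sum h1 (Finset.mem_univ v)
  have hsplit : (∑ w : Vert, ((expv w : ℤ) - (relExp (insert s S₀) w : ℤ)))
      = (∑ w : Vert, ((expv w : ℤ) - (relExp S₀ w : ℤ)))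
        + (∑ w : Vert, ((relExp S₀ w : ℤ) - (relExp (insert s S₀) w : ℤ))) := by
    rw [← Finset.sum_add_distrib]
    congr 1; ext w; ring
  linarith

/-- Marginal gain is monotone under greedy extension: if `S` is obtained from `S₀` by
applying steps of the greedy strategy, then `g(S₀) ≤ g(S)`; moreover, if `S` is
saturating (i.e. `exp_S(v) = 0` for all `v`, so `S` induces a rectangulation), then
`|S| = exp(N) - g(S) ≤ exp(N) - g(S₀)`. -/
theorem stmt_16 {Seg Vert : Type*} [Fintype Vert] [DecidableEq Seg]
    (expv : Vert → ℕ) (relExp : Finset Seg → Vert → ℕ)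
    (S₀ S : Finset Seg)
    (hgreedy : Relation.ReflTransGen (GreedyStep relExp) S₀ S) :
    gain expv relExp S₀ ≤ gain expv relExp S ∧
      ((∀ v : Vert, relExp S v = 0) →
        (S.card : ℤ) = (∑ v : Vert, (expv v : ℤ)) - gain expv relExp S ∧
        (S.card : ℤ) ≤ (∑ v : Vert, (expv v : ℤ)) - gain expv relExp S₀) := by
  have hmono : gain expv relExp S₀ ≤ gain expv relExp S := by
    induction hgreedy with
    | refl => exact le_refl _
    | tail _ hstep ih => exact le_trans ih (gain_step expv relExp hstep)
  refine ⟨hmono, fun hsat => ?_⟩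
  have heq : (S.card : ℤ) = (∑ v : Vert, (expv v : ℤ)) - gain expv relExp S := by
    unfold gain
    have : (∑ v : Vert, ((expv v : ℤ) - (relExp S v : ℤ)))
        = ∑ v : Vert, (expv v : ℤ) := by
      apply Finset.sum_congr rfl
      intro v _; rw [hsat v]; ring
    rw [this]; ring
  exact ⟨heq, heq ▸ by linarith⟩
end
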